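/- Let a be an integer such that 27 + 4a³ is positive and prime. Then the polynomial X³ + aX + 1 is irreducible over ℚ, it has exactly one real root, and its Galois group over ℚ is isomorphic to the symmetric group S₃. -/

import Mathlib

open Polynomial

/-- A `MulEquiv` between permutation groups induced by an equivalence of types. -/
def permMulEquivAux {α β : Type*} (e : α ≃ β) : Equiv.Perm α ≃* Equiv.Perm β :=
  { Equiv.permCongr e with
    map_mul' := fun σ τ => by
      ext b
      simp [Equiv.permCongr, Equiv.equivCongr, Equiv.Perm.mul_apply] }

theorem stmt_17 (a : ℤ) (hpos : 0 < 27 + 4 * a ^ 3)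
    (hprime : Prime (27 + 4 * a ^ 3)) :
    Irreducible ((X : Polynomial ℚ) ^ 3 + C (a : ℚ) * X + 1) ∧
    (∃! x : ℝ, Polynomial.aeval x ((X : Polynomial ℚ) ^ 3 + C (a : ℚ) * X + 1) = 0) ∧
    Nonempty (((X : Polynomial ℚ) ^ 3 + C (a : ℚ) * X + 1).Gal ≃* Equiv.Perm (Fin 3)) := by
  set p : ℚ[X] := (X : Polynomial ℚ) ^ 3 + C (a : ℚ) * X + 1 with hp
  -- a ≥ -1
  have ha : -1 ≤ a := by
    by_contra h
    push_neg at h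
    have h2 : a ≤ -2 := by omega
    nlinarith [sq_nonneg a, sq_nonneg (a + 2)]
  have hdeg : p.natDegree = 3 := by
    rw [hp]; compute_degree!
  have hp0 : p ≠ 0 := by
    intro h
    rw [h, natDegree_zero] at hdeg
    exact absurd hdeg (by norm_num)
  -- irreducibility
  have hirr : Irreducible p := by
    rw [irreducible_iff_roots_eq_zero_of_degree_le_three (by omega) (by omega)]
    by_contra hroots
    obtain ⟨r, hr⟩ := Multiset.exists_mem_of_ne_zero hroots
    rw [mem_roots hp0] at hr
    have hr' : aeval r ((X : ℤ[X]) ^ 3 + C a * X + 1) = 0 := by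
      have := hr.eq_zero
      simp only [hp, eval_add, eval_mul, eval_pow, eval_X, eval_C, eval_one] at this
      simpa using this
    obtain ⟨m, hm, hmdvd⟩ := exists_integer_of_is_root_of_monic
      (p := (X : ℤ[X]) ^ 3 + C a * X + 1) (by monicity!) hr'
    have hc0 : ((X : ℤ[X]) ^ 3 + C a * X + 1).coeff 0 = 1 := by
      simp [coeff_one]
    rw [hc0] at hmdvd
    have hm1 : m = 1 ∨ m = -1 := Int.isUnit_iff.mp (isUnit_of_dvd_one hmdvd)
    have heval : (m : ℚ) ^ 3 + (a : ℚ) * m + 1 = 0 := by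
      rw [hm] at hr'
      simpa using hr'
    have hZ : m ^ 3 + a * m + 1 = 0 := by exact_mod_cast heval
    rcases hm1 with rfl | rfl
    · have : a = -2 := by linarith
      rw [this] at hpos; norm_num at hpos
    · have : a = 0 := by nlinarith
      rw [this] at hprime; norm_num at hprime
  have haeval : ∀ x : ℝ, aeval x p = x ^ 3 + (a : ℝ) * x + 1 := by
    intro x; simp [hp]
  set b : ℝ := (a : ℝ) with hb
  have hbge : -1 ≤ b := by rw [hb]; exact_mod_cast ha
  -- existence via IVT
  have hcont : ContinuousOn (fun x : ℝ => x ^ 3 + b * x + 1) (Set.Icc (-(b + 3)) 0) := by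
    fun_prop
  have hle : -(b + 3) ≤ 0 := by linarith
  have hneg : (-(b + 3)) ^ 3 + b * (-(b + 3)) + 1 < 0 := by nlinarith [sq_nonneg (b + 1)]
  have hmem : (0 : ℝ) ∈ Set.Icc ((-(b + 3)) ^ 3 + b * (-(b + 3)) + 1)
      ((0:ℝ) ^ 3 + b * 0 + 1) := by
    constructor
    · linarith
    · norm_num
  obtain ⟨x₀, _, hx₀⟩ := intermediate_value_Icc hle hcont hmem
  -- uniqueness
  have huniq : ∀ x y : ℝ, x ^ 3 + b * x + 1 = 0 → y ^ 3 + b * y + 1 = 0 → x = y := by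
    intro x y hx hy
    by_contra hxy
    have hsub : x - y ≠ 0 := sub_ne_zero.mpr hxy
    have hfac : (x - y) * (x ^ 2 + x * y + y ^ 2 + b) = 0 := by
      linear_combination hx - hy
    have hkey : x ^ 2 + x * y + y ^ 2 + b = 0 :=
      (mul_eq_zero.mp hfac).resolve_left hsub
    have hsq : 0 < (x - y) ^ 2 := by positivity
    rcases lt_or_ge a 0 with hneg' | hpos'
    · -- a = -1
      have : a = -1 := by omega
      have hb1 : b = -1 := by rw [hb, this]; norm_num
      rw [hb1] at hx hy hkey
      nlinarith [sq_nonneg (x + y), sq_nonneg (x + y - 1), sq_nonneg (x + y + 1),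
        sq_nonneg (x * y), sq_nonneg (x + y - 2), sq_nonneg (x * y - 1), sq_nonneg (x*y + 1),
        mul_pos hsq hsq, sq_nonneg ((x+y)^2 - 1)]
    · have hb0 : (0 : ℝ) ≤ b := by rw [hb]; exact_mod_cast hpos'
      nlinarith [sq_nonneg (x + y)]
  have hex : ∃! x : ℝ, aeval x p = 0 := by
    refine ⟨x₀, ?_, ?_⟩
    · show aeval x₀ p = 0
      rw [haeval]; exact hx₀
    · intro y hy
      rw [haeval] at hy
      exact huniq y x₀ hy hx₀
  refine ⟨hirr, hex, ?_⟩
  · -- Galois group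
    have hsep : p.Separable := hirr.separable
    have hcardC : Fintype.card (p.rootSet ℂ) = 3 := by
      rw [card_rootSet_eq_natDegree hsep (IsAlgClosed.splits (p.map (algebraMap ℚ ℂ))), hdeg]
    have hcardR : Fintype.card (p.rootSet ℝ) = 1 := by
      obtain ⟨x₀, hx₀, huniq⟩ := hex
      refine Fintype.card_eq_one_iff.mpr ⟨⟨x₀, ?_⟩, fun y => Subtype.ext ?_⟩
      · rw [mem_rootSet]
        exact ⟨hp0, hx₀⟩
      · exact huniq y ((mem_rootSet.mp y.2).2)
    have hbij := Polynomial.Gal.galActionHom_bijective_of_prime_degree hirr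
      (by rw [hdeg]; norm_num) (by rw [hcardC, hcardR])
    exact ⟨(MulEquiv.ofBijective _ hbij).trans
      (permMulEquivAux (Fintype.equivFinOfCardEq hcardC))⟩
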